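/- arXiv:2506.04638 — 3 statements merged into one kernel-verified Lean document; each statement's English description precedes it below -/
import Mathlib

section
/- Let Ω ⊆ ℂ² be open and let τ : ℤ → (Ω → ℂ) be a family of holomorphic nonvanishing functions satisfying the bilinear 2-dimensional Toda–Hirota equation τ_n·∂_x∂_y τ_n − (∂_x τ_n)(∂_y τ_n) = τ_{n+1}·τ_{n−1} on Ω for all n ∈ ℤ. Define s_{n+1} := (∂_y τ_n)/τ_n − (∂_y τ_{n+1})/τ_{n+1} and r_n := ( τ_n·∂_x∂_y τ_n − (∂_x τ_n)(∂_y τ_n) )/τ_n². Then for all n ∈ ℤ: (i) ∂_x s_{n+1} = r_n − r_{n+1}; (ii) ∂_y r_n = (s_n − s_{n+1})·r_n; (iii) r_n·∂_x∂_y r_n − (∂_x r_n)(∂_y r_n) = ( r_{n+1} − 2r_n + r_{n−1} )·r_n² (the bilinear form of the 2-dimensional Toda equation ∂_x∂_y log r_n = r_{n+1} − 2r_n + r_{n−1}). -/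
/-- Partial derivative with respect to the first coordinate of `ℂ × ℂ`. -/
noncomputable def dX (f : ℂ × ℂ → ℂ) : ℂ × ℂ → ℂ := fun z => fderiv ℂ f z (1, 0)

/-- Partial derivative with respect to the second coordinate of `ℂ × ℂ`. -/
noncomputable def dY (f : ℂ × ℂ → ℂ) : ℂ × ℂ → ℂ := fun z => fderiv ℂ f z (0, 1)

section Helpers

variable {f g : ℂ × ℂ → ℂ} {z v : ℂ × ℂ}

lemma fda_sub (hf : DifferentiableAt ℂ f z) (hg : DifferentiableAt ℂ g z) :
    fderiv ℂ (fun w => f w - g w) z v = fderiv ℂ f z v - fderiv ℂ g z v := by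
  rw [fderiv_fun_sub hf hg]; rfl

lemma fda_mul (hf : DifferentiableAt ℂ f z) (hg : DifferentiableAt ℂ g z) :
    fderiv ℂ (fun w => f w * g w) z v = f z * fderiv ℂ g z v + g z * fderiv ℂ f z v := by
  rw [fderiv_fun_mul hf hg]; simp

lemma fda_div (hf : DifferentiableAt ℂ f z) (hg : DifferentiableAt ℂ g z) (h0 : g z ≠ 0) :
    fderiv ℂ (fun w => f w / g w) z v
      = (fderiv ℂ f z v * g z - f z * fderiv ℂ g z v) / g z ^ 2 := by
  have hinv : HasFDerivAt (fun w => (g w)⁻¹) ((-(g z ^ 2)⁻¹) • fderiv ℂ g z) z :=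
    (hasDerivAt_inv h0).comp_hasFDerivAt z hg.hasFDerivAt
  have hmul := hf.hasFDerivAt.mul hinv
  have heq : (fun w => f w / g w) = fun w => f w * (g w)⁻¹ := by
    funext w; rw [div_eq_mul_inv]
  rw [heq, (show HasFDerivAt (fun w => f w * (g w)⁻¹) _ z from hmul).fderiv]
  simp only [ContinuousLinearMap.add_apply, ContinuousLinearMap.smul_apply, smul_eq_mul]
  field_simp
  ring

lemma fda_analytic {Ω : Set (ℂ × ℂ)} {f : ℂ × ℂ → ℂ}
    (hf : AnalyticOnNhd ℂ f Ω) (v : ℂ × ℂ) :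
    AnalyticOnNhd ℂ (fun w => fderiv ℂ f w v) Ω := by
  intro z hz
  exact ((ContinuousLinearMap.apply ℂ ℂ v).analyticAt _).comp ((hf.fderiv) z hz)

lemma fda_congr {f g : ℂ × ℂ → ℂ} {Ω : Set (ℂ × ℂ)} (hΩ : IsOpen Ω) {z : ℂ × ℂ} (hz : z ∈ Ω)
    (h : Set.EqOn f g Ω) (v : ℂ × ℂ) : fderiv ℂ f z v = fderiv ℂ g z v := by
  rw [Filter.EventuallyEq.fderiv_eq (Filter.eventuallyEq_of_mem (hΩ.mem_nhds hz) h)]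

end Helpers

/-- Proposition 2.9: if `τ_n` solves the bilinear 2-dimensional Toda–Hirota equation, then
`s_{n+1} = ∂_y log(τ_n/τ_{n+1})` and `r_n = ∂ₓ∂_y log τ_n` (in bilinear form) satisfy
(i) `∂ₓs_{n+1} = r_n − r_{n+1}`, (ii) `∂_y log r_n = s_n − s_{n+1}`, and
(iii) `r_n` solves the 2-dimensional Toda equation `∂ₓ∂_y log r_n = r_{n+1} − 2r_n + r_{n−1}`
in bilinear form. -/
theorem stmt_4 (Ω : Set (ℂ × ℂ)) (hΩ : IsOpen Ω)
    (τ : ℤ → ℂ × ℂ → ℂ)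
    (hτ : ∀ n : ℤ, AnalyticOnNhd ℂ (τ n) Ω)
    (hτne : ∀ n : ℤ, ∀ z ∈ Ω, τ n z ≠ 0)
    (hTHE : ∀ n : ℤ, ∀ z ∈ Ω,
      τ n z * dX (dY (τ n)) z - dX (τ n) z * dY (τ n) z = τ (n+1) z * τ (n-1) z)
    (s r : ℤ → ℂ × ℂ → ℂ)
    (hs : ∀ n : ℤ, s (n+1)
      = fun z => dY (τ n) z / τ n z - dY (τ (n+1)) z / τ (n+1) z)
    (hr : ∀ n : ℤ, r n
      = fun z => (τ n z * dX (dY (τ n)) z - dX (τ n) z * dY (τ n) z) / (τ n z)^2) :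
    ∀ n : ℤ, ∀ z ∈ Ω,
      dX (s (n+1)) z = r n z - r (n+1) z ∧
      dY (r n) z = (s n z - s (n+1) z) * r n z ∧
      r n z * dX (dY (r n)) z - dX (r n) z * dY (r n) z
        = (r (n+1) z - 2 * r n z + r (n-1) z) * (r n z)^2 := by
  have hdiff : ∀ k : ℤ, ∀ w ∈ Ω, DifferentiableAt ℂ (τ k) w :=
    fun k w hw => ((hτ k) w hw).differentiableAt
  have hAy : ∀ k : ℤ, AnalyticOnNhd ℂ (dY (τ k)) Ω := fun k => fda_analytic (hτ k) _
  have hAx : ∀ k : ℤ, AnalyticOnNhd ℂ (dX (τ k)) Ω := fun k => fda_analytic (hτ k) _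
  have hAxy : ∀ k : ℤ, AnalyticOnNhd ℂ (dX (dY (τ k))) Ω := fun k => fda_analytic (hAy k) _
  have hAr : ∀ k : ℤ, AnalyticOnNhd ℂ (r k) Ω := by
    intro k; rw [hr k]
    exact (((hτ k).mul (hAxy k)).sub ((hAx k).mul (hAy k))).div ((hτ k).pow 2)
      (fun w hw => pow_ne_zero _ (hτne k w hw))
  have hAs : ∀ k : ℤ, AnalyticOnNhd ℂ (s (k + 1)) Ω := by
    intro k; rw [hs k]
    exact ((hAy k).div (hτ k) (hτne k)).sub ((hAy (k+1)).div (hτ (k+1)) (hτne (k+1)))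
  have hAs' : ∀ k : ℤ, AnalyticOnNhd ℂ (s k) Ω := by
    intro k
    have hk : k - 1 + 1 = k := by ring
    have := hAs (k - 1); rwa [hk] at this
  -- Part (i)
  have E1 : ∀ m : ℤ, ∀ w ∈ Ω, dX (s (m+1)) w = r m w - r (m+1) w := by
    intro m w hw
    have d1 : DifferentiableAt ℂ (dY (τ m)) w := ((hAy m) w hw).differentiableAt
    have d2 := hdiff m w hw
    have d3 : DifferentiableAt ℂ (dY (τ (m+1))) w := ((hAy (m+1)) w hw).differentiableAt
    have d4 := hdiff (m+1) w hw
    have q1 : DifferentiableAt ℂ (fun u => dY (τ m) u / τ m u) w :=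
      ((((hAy m) w hw).div ((hτ m) w hw) (hτne m w hw))).differentiableAt
    have q2 : DifferentiableAt ℂ (fun u => dY (τ (m+1)) u / τ (m+1) u) w :=
      ((((hAy (m+1)) w hw).div ((hτ (m+1)) w hw) (hτne (m+1) w hw))).differentiableAt
    rw [hs m]
    show fderiv ℂ (fun u => dY (τ m) u / τ m u - dY (τ (m+1)) u / τ (m+1) u) w (1,0) = _
    rw [fda_sub q1 q2, fda_div d1 d2 (hτne m w hw), fda_div d3 d4 (hτne (m+1) w hw),
      hr m, hr (m+1)]
    simp only [dX, dY]
    ring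
  -- `r m` agrees on `Ω` with `τ_{m+1} τ_{m-1} / τ_m²` by the Toda–Hirota equation
  have hreq : ∀ m : ℤ, Set.EqOn (r m)
      (fun u => τ (m+1) u * τ (m-1) u / (τ m u * τ m u)) Ω := by
    intro m w hw
    rw [hr m]; simp only
    rw [hTHE m w hw, pow_two]
  -- Part (ii)
  have E2 : ∀ m : ℤ, ∀ w ∈ Ω, dY (r m) w = (s m w - s (m+1) w) * r m w := by
    intro m w hw
    have dnum : DifferentiableAt ℂ (fun u => τ (m+1) u * τ (m-1) u) w :=
      (hdiff (m+1) w hw).mul (hdiff (m-1) w hw)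
    have dden : DifferentiableAt ℂ (fun u => τ m u * τ m u) w :=
      (hdiff m w hw).mul (hdiff m w hw)
    have hden0 : τ m w * τ m w ≠ 0 := mul_ne_zero (hτne m w hw) (hτne m w hw)
    have h1 : dY (r m) w
        = fderiv ℂ (fun u => τ (m+1) u * τ (m-1) u / (τ m u * τ m u)) w (0,1) :=
      fda_congr hΩ hw (hreq m) _
    have hsm : s m = fun u => dY (τ (m-1)) u / τ (m-1) u - dY (τ m) u / τ m u := by
      have hk : m - 1 + 1 = m := by ring
      have := hs (m - 1); rwa [hk] at this
    rw [h1, fda_div dnum dden hden0, fda_mul (hdiff (m+1) w hw) (hdiff (m-1) w hw),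
      fda_mul (hdiff m w hw) (hdiff m w hw), hsm, hs m, hreq m hw]
    simp only [dY]
    field_simp [hτne (m+1) w hw, hτne (m-1) w hw, hτne m w hw]
    ring
  intro n z hz
  refine ⟨E1 n z hz, E2 n z hz, ?_⟩
  -- Part (iii)
  have hE2fun : Set.EqOn (dY (r n)) (fun u => (s n u - s (n+1) u) * r n u) Ω :=
    fun w hw => E2 n w hw
  have dsn : DifferentiableAt ℂ (s n) z := ((hAs' n) z hz).differentiableAt
  have dsn1 : DifferentiableAt ℂ (s (n+1)) z := ((hAs' (n+1)) z hz).differentiableAt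
  have dssub : DifferentiableAt ℂ (fun u => s n u - s (n+1) u) z := dsn.sub dsn1
  have drn : DifferentiableAt ℂ (r n) z := ((hAr n) z hz).differentiableAt
  have h4 : fderiv ℂ (fun u => s n u - s (n+1) u) z (1,0)
      = (r (n-1) z - r n z) - (r n z - r (n+1) z) := by
    rw [fda_sub dsn dsn1]
    have e1 : dX (s n) z = r (n-1) z - r n z := by
      have hk : n - 1 + 1 = n := by ring
      have := E1 (n-1) z hz; rwa [hk] at this
    have e2 := E1 n z hz
    simp only [dX] at e1 e2
    rw [e1, e2]
  have h3 : dX (dY (r n)) z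
      = (s n z - s (n+1) z) * dX (r n) z
        + r n z * ((r (n-1) z - r n z) - (r n z - r (n+1) z)) := by
    have hcg := fda_congr hΩ hz hE2fun (1,0)
    show fderiv ℂ (dY (r n)) z (1,0) = _
    rw [hcg, fda_mul dssub drn, h4]
    simp only [dX]
    try ring
  rw [h3, E2 n z hz]
  ring
end

section
/- Let Ω ⊆ ℂ² be open and let t, u : ℤ → (Ω → ℂ) be families of holomorphic functions with every t_n nonvanishing on Ω, satisfying the bilinear 2-dimensional Toda–Hirota equation t_n·∂_x∂_y t_n − (∂_x t_n)(∂_y t_n) = t_{n+1}·t_{n−1} for all n ∈ ℤ. Define r_n := ( t_n·∂_x∂_y t_n − (∂_x t_n)(∂_y t_n) )/t_n² (= t_{n+1}t_{n−1}/t_n²) and s_{n+1} := (∂_y t_n)/t_n − (∂_y t_{n+1})/t_{n+1}. Suppose that for every n ∈ ℤ: (a) ∂_x∂_y u_n + s_{n+1}·∂_x u_n + r_n·u_n = 0; (b) u_{n+1} = ∂_y u_n + s_{n+1}·u_n; (c) ∂_x u_n = −r_n·u_{n−1}. Then τ_n := t_n·u_n satisfies τ_n·∂_x∂_y τ_n −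 (∂_x τ_n)(∂_y τ_n) = τ_{n+1}·τ_{n−1} on Ω for all n ∈ ℤ. -/
lemma dX_mul (f g : ℂ × ℂ → ℂ) (z : ℂ × ℂ) (hf : DifferentiableAt ℂ f z)
    (hg : DifferentiableAt ℂ g z) :
    dX (fun w => f w * g w) z = dX f z * g z + f z * dX g z := by
  unfold dX
  rw [fderiv_fun_mul hf hg]
  simp only [ContinuousLinearMap.add_apply, ContinuousLinearMap.smul_apply, smul_eq_mul]
  ring

lemma dY_mul (f g : ℂ × ℂ → ℂ) (z : ℂ × ℂ) (hf : DifferentiableAt ℂ f z)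
    (hg : DifferentiableAt ℂ g z) :
    dY (fun w => f w * g w) z = dY f z * g z + f z * dY g z := by
  unfold dY
  rw [fderiv_fun_mul hf hg]
  simp only [ContinuousLinearMap.add_apply, ContinuousLinearMap.smul_apply, smul_eq_mul]
  ring

lemma diffAt_dY {f : ℂ × ℂ → ℂ} {z : ℂ × ℂ} (hf : AnalyticAt ℂ f z) :
    DifferentiableAt ℂ (dY f) z := by
  have h1 : DifferentiableAt ℂ (fderiv ℂ f) z := hf.fderiv.differentiableAt
  exact h1.clm_apply (differentiableAt_const _)

lemma diffAt_dX {f : ℂ × ℂ → ℂ} {z : ℂ × ℂ} (hf : AnalyticAt ℂ f z) :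
    DifferentiableAt ℂ (dX f) z := by
  have h1 : DifferentiableAt ℂ (fderiv ℂ f) z := hf.fderiv.differentiableAt
  exact h1.clm_apply (differentiableAt_const _)

/-- Proposition 2.11 (Bäcklund transformation): if `{t_n}` solves the bilinear 2-dimensional
Toda–Hirota equation, and `u_n` solves the Laplace sequence equation
`∂ₓ∂_y u_n + s_{n+1}∂ₓu_n + r_n u_n = 0` with `u_{n+1} = H_n u_n = ∂_y u_n + s_{n+1}u_n`
and `u_{n-1} = B_n u_n`, i.e. `∂ₓu_n = −r_n u_{n−1}`, then `τ_n = t_n·u_n` again solves the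
bilinear 2-dimensional Toda–Hirota equation. -/
theorem stmt_5 (Ω : Set (ℂ × ℂ)) (hΩ : IsOpen Ω)
    (t u : ℤ → ℂ × ℂ → ℂ)
    (ht : ∀ n : ℤ, AnalyticOnNhd ℂ (t n) Ω)
    (hu : ∀ n : ℤ, AnalyticOnNhd ℂ (u n) Ω)
    (htne : ∀ n : ℤ, ∀ z ∈ Ω, t n z ≠ 0)
    (hTHE : ∀ n : ℤ, ∀ z ∈ Ω,
      t n z * dX (dY (t n)) z - dX (t n) z * dY (t n) z = t (n+1) z * t (n-1) z)
    (s r : ℤ → ℂ × ℂ → ℂ)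
    (hr : ∀ n : ℤ, r n
      = fun z => (t n z * dX (dY (t n)) z - dX (t n) z * dY (t n) z) / (t n z)^2)
    (hs : ∀ n : ℤ, s (n+1)
      = fun z => dY (t n) z / t n z - dY (t (n+1)) z / t (n+1) z)
    (ha : ∀ n : ℤ, ∀ z ∈ Ω,
      dX (dY (u n)) z + s (n+1) z * dX (u n) z + r n z * u n z = 0)
    (hb : ∀ n : ℤ, ∀ z ∈ Ω, u (n+1) z = dY (u n) z + s (n+1) z * u n z)
    (hc : ∀ n : ℤ, ∀ z ∈ Ω, dX (u n) z = -(r n z) * u (n-1) z)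
    (τ : ℤ → ℂ × ℂ → ℂ)
    (hτ : ∀ n : ℤ, τ n = fun z => t n z * u n z) :
    ∀ n : ℤ, ∀ z ∈ Ω,
      τ n z * dX (dY (τ n)) z - dX (τ n) z * dY (τ n) z = τ (n+1) z * τ (n-1) z := by
  intro n z hz
  have htz := (ht n z hz).differentiableAt
  have huz := (hu n z hz).differentiableAt
  -- first derivatives of τ n
  have hdXτ : dX (τ n) z = dX (t n) z * u n z + t n z * dX (u n) z := by
    rw [hτ n]; exact dX_mul _ _ _ htz huz
  have hdYτ : dY (τ n) z = dY (t n) z * u n z + t n z * dY (u n) z := by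
    rw [hτ n]; exact dY_mul _ _ _ htz huz
  -- dY τ agrees with the product-rule expression on a neighborhood of z
  have hev : dY (τ n) =ᶠ[nhds z] fun w => dY (t n) w * u n w + t n w * dY (u n) w := by
    filter_upwards [hΩ.mem_nhds hz] with w hw
    rw [hτ n]
    exact dY_mul _ _ _ ((ht n w hw).differentiableAt) ((hu n w hw).differentiableAt)
  -- second mixed derivative of τ n
  have hdXdYτ : dX (dY (τ n)) z
      = dX (dY (t n)) z * u n z + dY (t n) z * dX (u n) z
        + (dX (t n) z * dY (u n) z + t n z * dX (dY (u n)) z) := by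
    have h1 : dX (dY (τ n)) z
        = dX (fun w => dY (t n) w * u n w + t n w * dY (u n) w) z := by
      unfold dX
      rw [hev.fderiv_eq]
    rw [h1]
    have d1 : DifferentiableAt ℂ (fun w => dY (t n) w * u n w) z :=
      (diffAt_dY (ht n z hz)).mul huz
    have d2 : DifferentiableAt ℂ (fun w => t n w * dY (u n) w) z :=
      htz.mul (diffAt_dY (hu n z hz))
    have hadd : dX (fun w => dY (t n) w * u n w + t n w * dY (u n) w) z
        = dX (fun w => dY (t n) w * u n w) z + dX (fun w => t n w * dY (u n) w) z := by
      unfold dX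
      rw [fderiv_fun_add d1 d2]
      simp
    rw [hadd, dX_mul _ _ _ (diffAt_dY (ht n z hz)) huz,
        dX_mul _ _ _ htz (diffAt_dY (hu n z hz))]
  -- algebraic relations
  have hT := htne n z hz
  have hR : r n z * (t n z) ^ 2 = t (n+1) z * t (n-1) z := by
    rw [hr n]
    field_simp
    exact hTHE n z hz
  have H1 := hTHE n z hz
  have H2 := ha n z hz
  have H3 := hb n z hz
  have H4 := hc n z hz
  rw [hdXdYτ, hdXτ, hdYτ]
  simp only [hτ]
  -- polynomial identity
  linear_combination (u n z ^ 2) * H1 + (u (n+1) z * u (n-1) z - u n z ^ 2) * hR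
    + (t n z ^ 2 * u n z) * H2 + (t n z ^ 2 * dX (u n) z) * H3
    - (t n z ^ 2 * u (n+1) z) * H4
end

section
/- Let N ≥ 3, α ∈ ℂ^N, let Ω ⊆ {x ∈ ℂ^N : x_a ≠ x_b for all a ≠ b} be open, let 1 ≤ p, q, r ≤ N be pairwise distinct, and let u : Ω → ℂ be holomorphic with M_{q,r}(α)u = 0 on Ω, i.e. ∂_q∂_r u + (α_r/(x_q−x_r))∂_q u + (α_q/(x_r−x_q))∂_r u = 0. Then on Ω: (i) (x_p − x_q)·∂_q( L_{q,r}(α)u ) + (α_q + 1)·L_{q,r}(α)u = (α_q + 1)·( (x_p − x_r)·∂_r u + α_r·u ), i.e. L_{p,q}(α+e_q)∘L_{q,r}(α)u = (α_q+1)·L_{p,r}(α)u; (ii) (x_q − x_r)·∂_r( L_{p,q}(α)u ) + α_r·L_{p,q}(α)u = α_q·( (x_p − x_r)·∂_r u + α_r·u ), i.e. L_{q,r}(α)∘L_{p,q}(α)u = α_q·L_{p,r}(α)u. Here L_{a,b}(β)w = (x_a − x_b)∂_b w + β_b w and L_{q,r}(α)u = (x_q−x_r)∂_r u + α_r u, L_{p,q}(α)u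 = (x_p−x_q)∂_q u + α_q u. -/
/-- Partial derivative of a function on `ℂ^N` with respect to the `p`-th coordinate. -/
noncomputable def pder {N : ℕ} (p : Fin N) (f : (Fin N → ℂ) → ℂ) : (Fin N → ℂ) → ℂ :=
  fun x => fderiv ℂ f x (Pi.single p (1 : ℂ))

/-- The contiguity operator `L_{p,q}(α) = (x_p − x_q)∂_q + α_q` (here given by the
coefficient `β_b` at the second index, so `Lop` below takes the scalar directly). -/
noncomputable def Lop {N : ℕ} (α : Fin N → ℂ) (p q : Fin N) (f : (Fin N → ℂ) → ℂ) :
    (Fin N → ℂ) → ℂ :=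
  fun x => (x p - x q) * pder q f x + α q * f x

lemma pder_clm_rep {N : ℕ} (a : Fin N) (f : (Fin N → ℂ) → ℂ) :
    pder a f = fun y => (fderiv ℂ f y) (Pi.single a (1 : ℂ)) := rfl

lemma pder_diffAt {N : ℕ} {u : (Fin N → ℂ) → ℂ} {x : Fin N → ℂ}
    (hu : AnalyticAt ℂ u x) (a : Fin N) : DifferentiableAt ℂ (pder a u) x := by
  rw [pder_clm_rep]
  exact hu.fderiv.differentiableAt.clm_apply (differentiableAt_const _)

lemma pder_add {N : ℕ} {f g : (Fin N → ℂ) → ℂ} {x : Fin N → ℂ}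
    (hf : DifferentiableAt ℂ f x) (hg : DifferentiableAt ℂ g x) (a : Fin N) :
    pder a (fun y => f y + g y) x = pder a f x + pder a g x := by
  unfold pder; rw [fderiv_fun_add hf hg]; simp

lemma pder_mul {N : ℕ} {f g : (Fin N → ℂ) → ℂ} {x : Fin N → ℂ}
    (hf : DifferentiableAt ℂ f x) (hg : DifferentiableAt ℂ g x) (a : Fin N) :
    pder a (fun y => f y * g y) x = f x * pder a g x + g x * pder a f x := by
  unfold pder; rw [fderiv_fun_mul hf hg]; simp

lemma pder_const_mul {N : ℕ} {f : (Fin N → ℂ) → ℂ} {x : Fin N → ℂ}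
    (hf : DifferentiableAt ℂ f x) (c : ℂ) (a : Fin N) :
    pder a (fun y => c * f y) x = c * pder a f x := by
  unfold pder; rw [fderiv_const_mul hf]; simp

lemma pder_sub {N : ℕ} {f g : (Fin N → ℂ) → ℂ} {x : Fin N → ℂ}
    (hf : DifferentiableAt ℂ f x) (hg : DifferentiableAt ℂ g x) (a : Fin N) :
    pder a (fun y => f y - g y) x = pder a f x - pder a g x := by
  unfold pder; rw [fderiv_fun_sub hf hg]; simp

lemma coord_diffAt {N : ℕ} (b : Fin N) (x : Fin N → ℂ) :
    DifferentiableAt ℂ (fun y : Fin N → ℂ => y b) x :=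
  (ContinuousLinearMap.proj (R := ℂ) (φ := fun _ : Fin N => ℂ) b).differentiable.differentiableAt

lemma pder_coord {N : ℕ} (a b : Fin N) (x : Fin N → ℂ) :
    pder a (fun y => y b) x = if b = a then 1 else 0 := by
  unfold pder
  have h : (fun y : Fin N → ℂ => y b)
      = ⇑(ContinuousLinearMap.proj (R := ℂ) (φ := fun _ : Fin N => ℂ) b) := rfl
  rw [h, ContinuousLinearMap.fderiv]
  simp [Pi.single_apply]

lemma pder_pder {N : ℕ} {u : (Fin N → ℂ) → ℂ} {x : Fin N → ℂ}
    (hu : AnalyticAt ℂ u x) (a b : Fin N) :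
    pder a (pder b u) x
      = fderiv ℂ (fderiv ℂ u) x (Pi.single a (1 : ℂ)) (Pi.single b (1 : ℂ)) := by
  rw [pder_clm_rep b u]
  unfold pder
  rw [fderiv_clm_apply hu.fderiv.differentiableAt (differentiableAt_const _)]
  simp

lemma pder_comm {N : ℕ} {u : (Fin N → ℂ) → ℂ} {x : Fin N → ℂ}
    (hu : AnalyticAt ℂ u x) (a b : Fin N) :
    pder a (pder b u) x = pder b (pder a u) x := by
  rw [pder_pder hu, pder_pder hu]
  exact (hu.contDiffAt (n := 2)).isSymmSndFDerivAt (by simp) _ _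

/-- Lemma 4.7: on a solution `u` of `M_{q,r}(α)u = 0`,
(i) `L_{p,q}(α+e_q)(L_{q,r}(α)u) = (α_q+1)·L_{p,r}(α)u` and
(ii) `L_{q,r}(α)(L_{p,q}(α)u) = α_q·L_{p,r}(α)u`. -/
theorem stmt_16 {N : ℕ} (hN : 3 ≤ N) (α : Fin N → ℂ)
    (Ω : Set (Fin N → ℂ)) (hΩ : IsOpen Ω)
    (hΩsub : Ω ⊆ {x | ∀ a b : Fin N, a ≠ b → x a ≠ x b})
    (p q r : Fin N) (hpq : p ≠ q) (hqr : q ≠ r) (hpr : p ≠ r)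
    (u : (Fin N → ℂ) → ℂ) (hu : AnalyticOnNhd ℂ u Ω)
    (hueq : ∀ x ∈ Ω,
      pder q (pder r u) x + (α r / (x q - x r)) * pder q u x
        + (α q / (x r - x q)) * pder r u x = 0) :
    ∀ x ∈ Ω,
      ((x p - x q) * pder q (Lop α q r u) x + (α q + 1) * Lop α q r u x
        = (α q + 1) * ((x p - x r) * pder r u x + α r * u x)) ∧
      ((x q - x r) * pder r (Lop α p q u) x + α r * Lop α p q u x
        = α q * ((x p - x r) * pder r u x + α r * u x)) := by
  intro x hx
  have hax : AnalyticAt ℂ u x := hu x hx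
  have hdu : DifferentiableAt ℂ u x := hax.differentiableAt
  have hdq : DifferentiableAt ℂ (pder q u) x := pder_diffAt hax q
  have hdr : DifferentiableAt ℂ (pder r u) x := pder_diffAt hax r
  have hsq : x q - x r ≠ 0 := sub_ne_zero.2 (hΩsub hx q r hqr)
  have hsr : x r - x q ≠ 0 := sub_ne_zero.2 (hΩsub hx r q (Ne.symm hqr))
  -- the key consequence of the EPD equation
  have key : (x q - x r) * pder q (pder r u) x
      = - (α r) * pder q u x + α q * pder r u x := by
    have h := hueq x hx
    field_simp at h
    exact mul_left_cancel₀ hsr (by linear_combination h)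
  constructor
  · -- part (i)
    have hLrw : Lop α q r u
        = fun y => ((fun z => z q - z r) y * pder r u y) + (α r * u y) := rfl
    have hsub : DifferentiableAt ℂ (fun y : Fin N → ℂ => y q - y r) x :=
      (coord_diffAt q x).sub (coord_diffAt r x)
    have e1 : pder q (Lop α q r u) x
        = ((x q - x r) * pder q (pder r u) x + pder r u x * 1)
          + α r * pder q u x := by
      rw [hLrw, pder_add (f := fun y => (fun z => z q - z r) y * pder r u y) (hsub.mul hdr) (hdu.const_mul _),
        pder_mul hsub hdr, pder_const_mul hdu]
      have e2 : pder q (fun y : Fin N → ℂ => y q - y r) x = 1 := by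
        rw [pder_sub (coord_diffAt q x) (coord_diffAt r x),
          pder_coord, pder_coord]
        simp [hqr.symm]
      rw [e2]
    have hLval : Lop α q r u x = (x q - x r) * pder r u x + α r * u x := rfl
    rw [e1, hLval]
    linear_combination (x p - x q) * key
  · -- part (ii)
    have hLrw : Lop α p q u
        = fun y => ((fun z => z p - z q) y * pder q u y) + (α q * u y) := rfl
    have hsub : DifferentiableAt ℂ (fun y : Fin N → ℂ => y p - y q) x :=
      (coord_diffAt p x).sub (coord_diffAt q x)
    have e1 : pder r (Lop α p q u) x
        = ((x p - x q) * pder r (pder q u) x + pder q u x * 0)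
          + α q * pder r u x := by
      rw [hLrw, pder_add (f := fun y => (fun z => z p - z q) y * pder q u y) (hsub.mul hdq) (hdu.const_mul _),
        pder_mul hsub hdq, pder_const_mul hdu]
      have e2 : pder r (fun y : Fin N → ℂ => y p - y q) x = 0 := by
        rw [pder_sub (coord_diffAt p x) (coord_diffAt q x),
          pder_coord, pder_coord]
        simp [hpr, hqr]
      rw [e2]
    have hLval : Lop α p q u x = (x p - x q) * pder q u x + α q * u x := rfl
    rw [e1, hLval, pder_comm hax r q]
    linear_combination (x p - x q) * key
end
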